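/- If π is an irreducible permutation of {1,…,m}, then the permutation bπ defined by bπ(j) = π(j) if π(j) ≤ π(m), bπ(j) = π(j)+1 if π(m) < π(j) < m, and bπ(j) = π(m)+1 if π(j) = m, is also irreducible. -/
import Mathlib


/-- A map `f` on `{0,…,m-1}` (0-based version of `{1,…,m}`) is irreducible if for every
`0 < k < m` the initial segment `{0,…,k-1}` is *not* invariant. -/
def RauzyIrred {m : ℕ} (f : Fin m → Fin m) : Prop :=
  ∀ k : ℕ, 0 < k → k < m → ∃ j : Fin m, (j : ℕ) < k ∧ k ≤ (f j : ℕ)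

/-- The Rauzy operation `b` preserves irreducibility. -/
theorem rauzy_b_irreducible {m : ℕ} (hm : 2 ≤ m) (π : Equiv.Perm (Fin m))
    (hπ : RauzyIrred π) (f : Fin m → Fin m)
    (h1 : ∀ j : Fin m, ((π j : Fin m) : ℕ) ≤ ((π ⟨m - 1, by omega⟩ : Fin m) : ℕ) →
      f j = π j)
    (h2 : ∀ j : Fin m, ((π ⟨m - 1, by omega⟩ : Fin m) : ℕ) < ((π j : Fin m) : ℕ) →
      ((π j : Fin m) : ℕ) < m - 1 → ((f j : Fin m) : ℕ) = ((π j : Fin m) : ℕ) + 1)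
    (h3 : ∀ j : Fin m, ((π j : Fin m) : ℕ) = m - 1 →
      ((f j : Fin m) : ℕ) = ((π ⟨m - 1, by omega⟩ : Fin m) : ℕ) + 1) :
    RauzyIrred f := by
  intro k hk0 hkm
  by_contra hcon
  push_neg at hcon
  set D := ((π ⟨m - 1, by omega⟩ : Fin m) : ℕ) with hD
  have fval : ∀ a : Fin m,
      ((π a : ℕ) ≤ D ∧ (f a : ℕ) = (π a : ℕ)) ∨
      (D < (π a : ℕ) ∧ (π a : ℕ) < m - 1 ∧ (f a : ℕ) = (π a : ℕ) + 1) ∨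
      ((π a : ℕ) = m - 1 ∧ (f a : ℕ) = D + 1) := by
    intro a
    rcases le_or_gt (π a : ℕ) D with h | h
    · exact Or.inl ⟨h, by rw [h1 a h]⟩
    · by_cases h' : (π a : ℕ) = m - 1
      · exact Or.inr (Or.inr ⟨h', h3 a h'⟩)
      · have := (π a).isLt
        exact Or.inr (Or.inl ⟨h, by omega, h2 a h (by omega)⟩)
  obtain ⟨j, hj, hπj⟩ := hπ k hk0 hkm
  have hfj := hcon j hj
  rcases fval j with ⟨c1, c2⟩ | ⟨c1, c1', c2⟩ | ⟨c1, c2⟩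
  · omega
  · omega
  · -- π j = m - 1, f j = D + 1 < k
    have hDk : D + 1 < k := by omega
    have finj : Function.Injective f := by
      intro a b hab
      have hab' : (f a : ℕ) = (f b : ℕ) := by rw [hab]
      have ha := (f a).isLt
      have hb := (f b).isLt
      rcases fval a with ⟨a1, a2⟩ | ⟨a1, a1', a2⟩ | ⟨a1, a2⟩ <;>
        rcases fval b with ⟨b1, b2⟩ | ⟨b1, b1', b2⟩ | ⟨b1, b2⟩ <;>
        exact π.injective (Fin.ext (by omega))
    have gkm : ∀ i : Fin k, (i : ℕ) < m := fun i => lt_trans i.isLt hkm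
    let g : Fin k → Fin k := fun i =>
      ⟨(f ⟨(i : ℕ), gkm i⟩ : ℕ), hcon ⟨(i : ℕ), gkm i⟩ i.isLt⟩
    have ginj : Function.Injective g := by
      intro a b hab
      have h' : (f ⟨(a : ℕ), gkm a⟩ : ℕ) = (f ⟨(b : ℕ), gkm b⟩ : ℕ) := by
        simpa [g] using congrArg Fin.val hab
      have h'' := finj (Fin.ext h')
      exact Fin.ext (Fin.mk_eq_mk.mp h'')
    have gsurj : Function.Surjective g := Finite.surjective_of_injective ginj
    obtain ⟨i, hi⟩ := gsurj ⟨D, by omega⟩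
    have hiv : (f ⟨(i : ℕ), gkm i⟩ : ℕ) = D := by
      simpa [g] using congrArg Fin.val hi
    rcases fval ⟨(i : ℕ), gkm i⟩ with ⟨d1, d2⟩ | ⟨d1, d1', d2⟩ | ⟨d1, d2⟩
    · -- π i' = D = π ⟨m-1⟩, so i' = m-1, contradiction with i < k ≤ m-1
      have : π ⟨(i : ℕ), gkm i⟩ = π ⟨m - 1, by omega⟩ := Fin.ext (by omega)
      have := congrArg Fin.val (π.injective this)
      simp only [] at this
      have := i.isLt
      omega
    · omega
    · omega
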